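/- Let k be a field, let (F, G, ◁, ▷) be a matched pair of groups with G finite, and let σ : G × F × F → kˣ be a normalized cocycle. Let A be the free k-module with basis {p_g # f | g ∈ G, f ∈ F} (i.e. finitely supported functions on G × F), with bilinear multiplication determined by (p_g # f)(p_{g'} # f') = δ_{g ◁ f, g'} σ(g; f, f') (p_g # f f'), where δ is the Kronecker delta. Then this multiplication is associative, and the element Σ_{g ∈ G} p_g # 1_F is a two-sided unit for it; hence A is an associative unital k-algebra. -/

import Mathlib

/-- The crossed product multiplication on the free `k`-module with basis
`{p_g # f | g ∈ G, f ∈ F}` (realized as finitely supported functions on `G × F`):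
`(p_g # f)(p_{g'} # f') = δ_{g ◁ f, g'} σ(g; f, f') (p_g # f f')`. -/
noncomputable def cpMul {k F G : Type*} [Field k] [Group F] [Group G] [DecidableEq G]
    (coa : G → F → G) (σ : G → F → F → kˣ)
    (a b : (G × F) →₀ k) : (G × F) →₀ k :=
  a.sum fun p c => b.sum fun q d =>
    if coa p.1 p.2 = q.1 then
      Finsupp.single (p.1, p.2 * q.2) (c * d * (σ p.1 p.2 q.2 : k))
    else 0

/-- The element `Σ_{g ∈ G} p_g # 1_F`. -/
noncomputable def cpOne {k F G : Type*} [Field k] [One F] [Fintype G] : (G × F) →₀ k :=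
  ∑ g : G, Finsupp.single (g, (1 : F)) (1 : k)

section helpers
variable {k F G : Type*} [Field k] [Group F] [Group G] [DecidableEq G]
  (coa : G → F → G) (σ : G → F → F → kˣ)

lemma cpMul_zero_left (b : (G × F) →₀ k) : cpMul coa σ 0 b = 0 := by
  simp [cpMul]

lemma cpMul_zero_right (a : (G × F) →₀ k) : cpMul coa σ a 0 = 0 := by
  simp [cpMul]

lemma cpMul_add_left (a a' b : (G × F) →₀ k) :
    cpMul coa σ (a + a') b = cpMul coa σ a b + cpMul coa σ a' b := by
  classical
  unfold cpMul
  rw [Finsupp.sum_add_index (by intro p _; simp) ?_]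
  intro p _ c c'
  rw [← Finsupp.sum_add]
  apply Finsupp.sum_congr
  intro q _
  split_ifs with h
  · simp [add_mul, Finsupp.single_add]
  · simp

lemma cpMul_add_right (a b b' : (G × F) →₀ k) :
    cpMul coa σ a (b + b') = cpMul coa σ a b + cpMul coa σ a b' := by
  unfold cpMul
  rw [← Finsupp.sum_add]
  apply Finsupp.sum_congr
  intro p _
  classical
  rw [Finsupp.sum_add_index (by intro q _; simp) ?_]
  intro q _ d d'
  split_ifs with h
  · simp [mul_add, add_mul, Finsupp.single_add]
  · simp

lemma cpMul_single_single (p q : G × F) (c d : k) :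
    cpMul coa σ (Finsupp.single p c) (Finsupp.single q d) =
      if coa p.1 p.2 = q.1 then
        Finsupp.single (p.1, p.2 * q.2) (c * d * (σ p.1 p.2 q.2 : k)) else 0 := by
  unfold cpMul
  rw [Finsupp.sum_single_index (by simp), Finsupp.sum_single_index (by simp)]

lemma cpMul_sum_left {ι : Type*} (s : Finset ι) (f : ι → (G × F) →₀ k) (b : (G × F) →₀ k) :
    cpMul coa σ (∑ i ∈ s, f i) b = ∑ i ∈ s, cpMul coa σ (f i) b := by
  classical
  induction s using Finset.induction with
  | empty => simp [cpMul_zero_left]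
  | insert _ _ h ih => simp [Finset.sum_insert h, cpMul_add_left, ih]

lemma cpMul_sum_right {ι : Type*} (s : Finset ι) (a : (G × F) →₀ k) (f : ι → (G × F) →₀ k) :
    cpMul coa σ a (∑ i ∈ s, f i) = ∑ i ∈ s, cpMul coa σ a (f i) := by
  classical
  induction s using Finset.induction with
  | empty => simp [cpMul_zero_right]
  | insert _ _ h ih => simp [Finset.sum_insert h, cpMul_add_right, ih]

end helpers

theorem crossedProduct_assoc_one {k : Type*} [Field k] {F : Type*} {G : Type*}
    [Group F] [Group G] [Fintype G] [DecidableEq G]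
    (tri : G → F → F) (coa : G → F → G)
    (h1 : ∀ f : F, tri 1 f = f)
    (h2 : ∀ (g g' : G) (f : F), tri (g * g') f = tri g (tri g' f))
    (h3 : ∀ g : G, coa g 1 = g)
    (h4 : ∀ (g : G) (f f' : F), coa g (f * f') = coa (coa g f) f')
    (h5 : ∀ (g : G) (f f' : F), tri g (f * f') = tri g f * tri (coa g f) f')
    (h6 : ∀ (g g' : G) (f : F), coa (g * g') f = coa g (tri g' f) * coa g' f)
    (σ : G → F → F → kˣ)
    (hσ1 : ∀ (g : G) (f : F), σ g 1 f = 1)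
    (hσ2 : ∀ (g : G) (f : F), σ g f 1 = 1)
    (hσ3 : ∀ f f' : F, σ 1 f f' = 1)
    (hσ4 : ∀ (g : G) (f f' f'' : F),
      σ (coa g f) f' f'' * σ g f (f' * f'') = σ g f f' * σ g (f * f') f'') :
    (∀ a b c : (G × F) →₀ k,
      cpMul coa σ (cpMul coa σ a b) c = cpMul coa σ a (cpMul coa σ b c)) ∧
    (∀ a : (G × F) →₀ k,
      cpMul coa σ (cpOne : (G × F) →₀ k) a = a ∧
        cpMul coa σ a (cpOne : (G × F) →₀ k) = a) := by
  constructor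
  · intro a b c
    induction a using Finsupp.induction_linear with
    | zero => simp [cpMul_zero_left]
    | add f g hf hg => simp [cpMul_add_left, hf, hg]
    | single p cp =>
      induction b using Finsupp.induction_linear with
      | zero => simp [cpMul_zero_left, cpMul_zero_right]
      | add f g hf hg => simp [cpMul_add_left, cpMul_add_right, hf, hg]
      | single q cq =>
        induction c using Finsupp.induction_linear with
        | zero => simp [cpMul_zero_right]
        | add f g hf hg => simp [cpMul_add_right, hf, hg]
        | single r cr =>
          by_cases hpq : coa p.1 p.2 = q.1
          · by_cases hqr : coa q.1 q.2 = r.1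
            · have hc : coa p.1 (p.2 * q.2) = r.1 := by rw [h4, hpq, hqr]
              have key : (σ (coa p.1 p.2) q.2 r.2 : k) * σ p.1 p.2 (q.2 * r.2) =
                  (σ p.1 p.2 q.2 : k) * σ p.1 (p.2 * q.2) r.2 := by
                rw [← Units.val_mul, ← Units.val_mul, hσ4]
              rw [cpMul_single_single, cpMul_single_single, if_pos hpq, if_pos hqr,
                cpMul_single_single, cpMul_single_single, if_pos hc, if_pos hpq]
              simp only [mul_assoc p.2]
              congr 1
              rw [hpq] at key
              linear_combination (-(cp * cq * cr)) * key
            · have hc : coa p.1 (p.2 * q.2) ≠ r.1 := by rw [h4, hpq]; exact hqr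
              rw [cpMul_single_single, cpMul_single_single, if_pos hpq, if_neg hqr,
                cpMul_single_single, cpMul_zero_right, if_neg hc]
          · rw [cpMul_single_single, cpMul_single_single, if_neg hpq, cpMul_zero_left]
            split_ifs with hqr
            · rw [cpMul_single_single, if_neg hpq]
            · rw [cpMul_zero_right]
  · intro a
    induction a using Finsupp.induction_linear with
    | zero => simp [cpMul_zero_left, cpMul_zero_right]
    | add f g hf hg =>
      exact ⟨by rw [cpMul_add_right, hf.1, hg.1], by rw [cpMul_add_left, hf.2, hg.2]⟩
    | single q d =>
      constructor
      · rw [cpOne, cpMul_sum_left]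
        have : ∀ g : G, cpMul coa σ (Finsupp.single (g, (1:F)) (1:k)) (Finsupp.single q d) =
            if g = q.1 then Finsupp.single (q.1, q.2) d else 0 := by
          intro g
          rw [cpMul_single_single]
          simp only [h3, hσ1, Units.val_one, one_mul, mul_one]
          split_ifs with h
          · rw [h]
          · rfl
        simp only [this]
        rw [Finset.sum_ite_eq' Finset.univ q.1 (fun _ => Finsupp.single (q.1, q.2) d)]
        simp
      · rw [cpOne, cpMul_sum_right]
        have : ∀ g : G, cpMul coa σ (Finsupp.single q d) (Finsupp.single (g, (1:F)) (1:k)) =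
            if coa q.1 q.2 = g then Finsupp.single (q.1, q.2) d else 0 := by
          intro g
          rw [cpMul_single_single]
          simp [hσ2]
        simp only [this]
        rw [Finset.sum_ite_eq Finset.univ (coa q.1 q.2) (fun _ => Finsupp.single (q.1, q.2) d)]
        simp
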